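/- Let N be a network on X with |X| ≥ 2, let x ∈ X, and let N−x be the network obtained from N by deleting x and its incident edge and suppressing the resulting degree-2 vertex. If N−x is tree-based, then N is tree-based. -/

import Mathlib

open SimpleGraph

/-- Degree of a vertex (as the cardinality of its neighbour set). -/
noncomputable def deg {W : Type*} (G : SimpleGraph W) (v : W) : ℕ :=
  (G.neighborSet v).ncard

/-- `T` is a support-tree for `G` with leaf set `X`: a spanning tree of `G`
whose leaves (vertices of degree at most 1) are exactly `X`. -/
def IsSupportTree {W : Type*} (G T : SimpleGraph W) (X : Set W) : Prop :=
  T ≤ G ∧ T.IsTree ∧ {v | deg T v ≤ 1} = X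

/-- A graph is tree-based on `X` if it has a support-tree with leaf set `X`. -/
def TreeBased {W : Type*} (G : SimpleGraph W) (X : Set W) : Prop :=
  ∃ T, IsSupportTree G T X

/-- An unrooted phylogenetic network on `X`: a connected graph all of whose
vertices have degree 1 or 3 (allowing the single-vertex convention via `≤ 1`),
whose leaves are exactly `X`. -/
def IsNetwork {W : Type*} (G : SimpleGraph W) (X : Set W) : Prop :=
  G.Connected ∧ (∀ v, deg G v ≤ 1 ∨ deg G v = 3) ∧ {v | deg G v ≤ 1} = X

/-- The cut-edge `{u,v}` induces a split of `X`: each side of the deleted edge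
contains an element of `X`. -/
def InducesSplit {W : Type*} (G : SimpleGraph W) (X : Set W) (u v : W) : Prop :=
  (∃ a ∈ X, (G.deleteEdges {s(u, v)}).Reachable u a) ∧
    ∃ b ∈ X, (G.deleteEdges {s(u, v)}).Reachable v b

/-- A network is proper if every cut-edge induces a split of `X`. -/
def ProperNet {W : Type*} (G : SimpleGraph W) (X : Set W) : Prop :=
  ∀ u v : W, (s(u, v) ∈ G.edgeSet ∧ G.IsBridge s(u, v)) → InducesSplit G X u v

/-- A network is simple if every cut-edge is trivial, i.e. has a leaf endpoint. -/
def SimpleNet {W : Type*} (G : SimpleGraph W) (X : Set W) : Prop :=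
  ∀ u v : W, (s(u, v) ∈ G.edgeSet ∧ G.IsBridge s(u, v)) → u ∈ X ∨ v ∈ X

/-- A graph is bridgeless if it has no cut-edge. -/
def Bridgeless {W : Type*} (H : SimpleGraph W) : Prop :=
  ∀ e, ¬ (e ∈ H.edgeSet ∧ H.IsBridge e)

/-- A blob of `G`: a maximal connected subgraph without a cut-edge that is not
a single vertex. -/
def IsBlob {W : Type*} (G : SimpleGraph W) (B : G.Subgraph) : Prop :=
  B.verts.Nontrivial ∧ B.Connected ∧ Bridgeless B.coe ∧
    ∀ B' : G.Subgraph, B'.verts.Nontrivial → B'.Connected → Bridgeless B'.coe →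
      B ≤ B' → B = B'

/-- The simple network `B_N` associated to a blob `B`: the union of `B` with
all cut-edges of `G` incident to `B`. -/
def blobNet {W : Type*} (G : SimpleGraph W) (B : G.Subgraph) : G.Subgraph where
  verts := B.verts ∪ {w | ∃ u ∈ B.verts, s(u, w) ∈ G.edgeSet ∧ G.IsBridge s(u, w)}
  Adj a b := B.Adj a b ∨ ((s(a, b) ∈ G.edgeSet ∧ G.IsBridge s(a, b)) ∧ (a ∈ B.verts ∨ b ∈ B.verts))
  adj_sub := by
    rintro v w (h | ⟨h, -⟩)
    · exact B.adj_sub h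
    · exact (SimpleGraph.mem_edgeSet G).mp h.1
  edge_vert := by
    rintro v w (h | ⟨h, hv | hw⟩)
    · exact Or.inl (B.edge_vert h)
    · exact Or.inl hv
    · exact Or.inr ⟨w, hw, by rwa [Sym2.eq_swap]⟩
  symm := by
    constructor
    rintro v w (h | ⟨h, hc⟩)
    · exact Or.inl (B.adj_symm h)
    · exact Or.inr ⟨by rwa [Sym2.eq_swap], hc.symm⟩

/-- The leaf set of `B_N`: endpoints of incident cut-edges not lying in `B`. -/
def blobNetLeaves {W : Type*} (G : SimpleGraph W) (B : G.Subgraph) :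
    Set (blobNet G B).verts :=
  {w | (w : W) ∉ B.verts}

/-- `G` is a level-`k` network: at most `k` edges must be removed from each
blob to obtain a tree. -/
def Level {W : Type*} (G : SimpleGraph W) (k : ℕ) : Prop :=
  ∀ B : G.Subgraph, IsBlob G B → B.edgeSet.ncard ≤ B.verts.ncard - 1 + k
/-- The network `N − x`: delete leaf `x` and its incident edge and suppress the
resulting degree-2 vertex `v` (the former neighbour of `x`). -/
def suppressAdj {V : Type*} (G : SimpleGraph V) (x v : V) :
    SimpleGraph {w : V // w ≠ x ∧ w ≠ v} where
  Adj a b := a ≠ b ∧ (G.Adj a b ∨ (G.Adj v a ∧ G.Adj v b))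
  symm := by
    constructor
    rintro a b ⟨h1, h2 | ⟨h3, h4⟩⟩
    · exact ⟨h1.symm, Or.inl h2.symm⟩
    · exact ⟨h1.symm, Or.inr ⟨h4, h3⟩⟩
  loopless := by constructor; rintro a ⟨h1, -⟩; exact h1 rfl

/-- The network `C_e(x,y)`: replace the edge `e = {u,v}` of `C` by a path
`u – w₁ – w₂ – v` and attach pendant leaves `x = Sum.inr 2` to `w₁ = Sum.inr 0`
and `y = Sum.inr 3` to `w₂ = Sum.inr 1`. -/
def extGraph {W : Type*} (C : SimpleGraph W) (u v : W) : SimpleGraph (W ⊕ Fin 4) :=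
  SimpleGraph.fromEdgeSet
    ((Sym2.map Sum.inl) '' (C.edgeSet \ {s(u, v)}) ∪
      {s(Sum.inl u, Sum.inr 0), s(Sum.inr 0, Sum.inr 1), s(Sum.inr 1, Sum.inl v),
       s(Sum.inr 0, Sum.inr 2), s(Sum.inr 1, Sum.inr 3)})

/-- The leaves `x` and `y` of `C_e(x,y)`. -/
def extLeaves (W : Type*) : Set (W ⊕ Fin 4) := {Sum.inr 2, Sum.inr 3}

/-- The Petersen graph, realized as the Kneser graph K(5,2). -/
def petersen : SimpleGraph {s : Finset (Fin 5) // s.card = 2} where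
  Adj a b := Disjoint (a : Finset (Fin 5)) (b : Finset (Fin 5))
  symm := ⟨fun a b h => h.symm⟩
  loopless := ⟨fun a h => by
    have h2 : (a : Finset (Fin 5)) = ∅ := by
      simpa using disjoint_self.mp h
    have := a.2
    rw [h2] at this
    simp at this⟩

/-- `D` is an orientation of the edges of `G`. -/
def IsOrientation {V : Type*} (G : SimpleGraph V) (D : V → V → Prop) : Prop :=
  (∀ u v, G.Adj u v ↔ (D u v ∨ D v u)) ∧ ∀ u v, ¬ (D u v ∧ D v u)

noncomputable def outdeg {α : Type*} (r : α → α → Prop) (v : α) : ℕ := {w | r v w}.ncard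
noncomputable def indeg {α : Type*} (r : α → α → Prop) (v : α) : ℕ := {w | r w v}.ncard

/-- A rooted (binary) phylogenetic network with root `ρ` and leaf set `Y`:
a DAG with a unique root of indegree 0 and outdegree 2, leaves (outdegree 0,
indegree 1) exactly `Y`, and all non-root vertices of total degree 1 or 3. -/
def IsRootedNetwork {α : Type*} (r : α → α → Prop) (ρ : α) (Y : Set α) : Prop :=
  (∀ v, ¬ Relation.TransGen r v v) ∧
  indeg r ρ = 0 ∧ outdeg r ρ = 2 ∧
  (∀ v, indeg r v = 0 → v = ρ) ∧
  (∀ v, v ≠ ρ → indeg r v + outdeg r v = 1 ∨ indeg r v + outdeg r v = 3) ∧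
  {v | outdeg r v = 0} = Y ∧ (∀ v ∈ Y, indeg r v = 1)

/-- A rooted network is tree-based if it contains a spanning arborescence
rooted at `ρ` whose leaf set is `Y`. -/
def RootedTreeBased {α : Type*} (r : α → α → Prop) (ρ : α) (Y : Set α) : Prop :=
  ∃ t : α → α → Prop, (∀ a b, t a b → r a b) ∧
    (∀ v, Relation.ReflTransGen t ρ v) ∧
    (∀ v, v ≠ ρ → indeg t v = 1) ∧ indeg t ρ = 0 ∧
    {v | outdeg t v = 0} = Y

/-- `T` is obtained from `T'` by suppressing all degree-2 vertices, via the
embedding `f` of the vertices of `T` into those of `T'`. -/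
def Suppresses {A B : Type*} (T' : SimpleGraph A) (T : SimpleGraph B) (f : B → A) : Prop :=
  Function.Injective f ∧
  (∀ a : A, deg T' a ≠ 2 → a ∈ Set.range f) ∧
  (∀ b : B, deg T' (f b) ≠ 2) ∧
  ∀ b b' : B, T.Adj b b' ↔
    ∃ p : T'.Walk (f b) (f b'), p.IsPath ∧
      ∀ a ∈ p.support, a ≠ f b → a ≠ f b' → deg T' a = 2

/-- `G` is fully tree-based on `X`: every subtree of `G` whose leaf set is `X`
is spanning (hence a support-tree). -/
def FullyTreeBased {W : Type*} (G : SimpleGraph W) (X : Set W) : Prop :=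
  ∀ H : G.Subgraph, H.Connected → H.coe.IsAcyclic →
    {v | v ∈ H.verts ∧ (H.neighborSet v).ncard ≤ 1} = X → H.IsSpanning

section Stmt3Aux

variable {V : Type*}

lemma closed_walk_mem {H : SimpleGraph V} {A : Set V}
    (hA : ∀ ⦃a b⦄, H.Adj a b → a ∈ A → b ∈ A) :
    ∀ {p q : V}, H.Walk p q → p ∈ A → q ∈ A := by
  intro p q w
  induction w with
  | nil => exact id
  | cons h _ ih => exact fun hp => ih (hA h hp)

lemma bridge_of_closed {H : SimpleGraph V} {p q : V} (hadj : H.Adj p q) (A : Set V)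
    (hp : p ∈ A) (hq : q ∉ A)
    (hA : ∀ ⦃a b⦄, (H \ SimpleGraph.fromEdgeSet {s(p, q)}).Adj a b → a ∈ A → b ∈ A) :
    H.IsBridge s(p, q) := by
  rw [SimpleGraph.isBridge_iff]
  refine fun hr => hq ?_
  obtain ⟨w⟩ := hr
  exact closed_walk_mem hA w hp

lemma del_adj (H : SimpleGraph V) (e : Sym2 V) {a b : V} :
    (H \ SimpleGraph.fromEdgeSet {e}).Adj a b ↔ H.Adj a b ∧ s(a, b) ≠ e := by
  constructor
  · rintro ⟨h1, h2⟩
    refine ⟨h1, fun he => h2 ?_⟩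
    exact (SimpleGraph.fromEdgeSet_adj _).mpr ⟨by simp [he], h1.ne⟩
  · rintro ⟨h1, h2⟩
    refine ⟨h1, fun hc => h2 ?_⟩
    simpa using ((SimpleGraph.fromEdgeSet_adj _).mp hc).1

lemma reachable_lift {B : Type*} {H : SimpleGraph V} {K : SimpleGraph B} (f : V → B)
    (hf : ∀ ⦃a b⦄, H.Adj a b → K.Reachable (f a) (f b)) {p q : V}
    (h : H.Reachable p q) : K.Reachable (f p) (f q) := by
  obtain ⟨w⟩ := h
  induction w with
  | nil => exact SimpleGraph.Reachable.refl _
  | cons h _ ih => exact (hf h).trans ih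

/-- The lifted tree: the pendant edge `x – v`, the edge `v – a0`, the edges
`v – b0` when the flag `F` holds, and all edges of `T'` that are real `G`-edges. -/
def stmtAdj (G : SimpleGraph V) (x v a0 b0 : V)
    (T' : SimpleGraph {w : V // w ≠ x ∧ w ≠ v}) (F : Prop) (p q : V) : Prop :=
  (p = x ∧ q = v) ∨ (p = v ∧ q = x) ∨ (p = v ∧ q = a0) ∨ (p = a0 ∧ q = v) ∨
  (F ∧ ((p = v ∧ q = b0) ∨ (p = b0 ∧ q = v))) ∨
  (∃ (hp : p ≠ x ∧ p ≠ v) (hq : q ≠ x ∧ q ≠ v), T'.Adj ⟨p, hp⟩ ⟨q, hq⟩ ∧ G.Adj p q)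

def stmtT (G : SimpleGraph V) (x v a0 b0 : V)
    (T' : SimpleGraph {w : V // w ≠ x ∧ w ≠ v}) (F : Prop)
    (hxv : x ≠ v) (hav : a0 ≠ v) (hbv : b0 ≠ v) : SimpleGraph V where
  Adj := stmtAdj G x v a0 b0 T' F
  symm := by
    constructor
    rintro p q (⟨rfl, rfl⟩ | ⟨rfl, rfl⟩ | ⟨rfl, rfl⟩ | ⟨rfl, rfl⟩ |
      ⟨hf, ⟨rfl, rfl⟩ | ⟨rfl, rfl⟩⟩ | ⟨hp, hq, ht, hg⟩)
    · exact Or.inr (Or.inl ⟨rfl, rfl⟩)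
    · exact Or.inl ⟨rfl, rfl⟩
    · exact Or.inr (Or.inr (Or.inr (Or.inl ⟨rfl, rfl⟩)))
    · exact Or.inr (Or.inr (Or.inl ⟨rfl, rfl⟩))
    · exact Or.inr (Or.inr (Or.inr (Or.inr (Or.inl ⟨hf, Or.inr ⟨rfl, rfl⟩⟩))))
    · exact Or.inr (Or.inr (Or.inr (Or.inr (Or.inl ⟨hf, Or.inl ⟨rfl, rfl⟩⟩))))
    · exact Or.inr (Or.inr (Or.inr (Or.inr (Or.inr ⟨hq, hp, ht.symm, hg.symm⟩))))
  loopless := by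
    constructor
    rintro p (⟨rfl, h⟩ | ⟨rfl, h⟩ | ⟨rfl, h⟩ | ⟨rfl, h⟩ |
      ⟨hf, ⟨rfl, h⟩ | ⟨rfl, h⟩⟩ | ⟨hp, hq, ht, hg⟩)
    · exact hxv h
    · exact hxv h.symm
    · exact hav h.symm
    · exact hav h
    · exact hbv h.symm
    · exact hbv h
    · exact G.loopless.irrefl p hg

lemma stmtT_adj (G : SimpleGraph V) (x v a0 b0 : V)
    (T' : SimpleGraph {w : V // w ≠ x ∧ w ≠ v}) (F : Prop)
    (hxv : x ≠ v) (hav : a0 ≠ v) (hbv : b0 ≠ v) (p q : V) :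
    (stmtT G x v a0 b0 T' F hxv hav hbv).Adj p q ↔
      ((p = x ∧ q = v) ∨ (p = v ∧ q = x) ∨ (p = v ∧ q = a0) ∨ (p = a0 ∧ q = v) ∨
      (F ∧ ((p = v ∧ q = b0) ∨ (p = b0 ∧ q = v))) ∨
      (∃ (hp : p ≠ x ∧ p ≠ v) (hq : q ≠ x ∧ q ≠ v), T'.Adj ⟨p, hp⟩ ⟨q, hq⟩ ∧ G.Adj p q)) :=
  Iff.rfl

end Stmt3Aux

/-- If `N − x` is tree-based then so is `N`. Here `v` is the (unique) neighbour
of the leaf `x`, and `N − x = suppressAdj G x v`. -/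
theorem stmt3 {V : Type*} [Fintype V] (G : SimpleGraph V) (X : Set V) (x v : V)
    (hN : IsNetwork G X) (hX : 2 ≤ X.ncard) (hx : x ∈ X)
    (hadj : G.Adj x v) (huniq : ∀ w, G.Adj x w → w = v)
    (h : TreeBased (suppressAdj G x v) {w | (w : V) ∈ X}) :
    TreeBased G X := by
  classical
  obtain ⟨T', hle, htree, hleaf⟩ := h
  obtain ⟨hconnG, hdegG, hXeq⟩ := hN
  have hxv : x ≠ v := hadj.ne
  have hXiff : ∀ w, w ∈ X ↔ deg G w ≤ 1 := fun w => (Set.ext_iff.mp hXeq w).symm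
  have hleafiff : ∀ w : {w : V // w ≠ x ∧ w ≠ v}, deg T' w ≤ 1 ↔ (w : V) ∈ X :=
    fun w => Set.ext_iff.mp hleaf w
  rcases hdegG v with hv1 | hv3
  · -- degenerate case: `v` has degree 1, so `V = {x, v}` and `N - x` is empty
    exfalso
    obtain ⟨w⟩ := htree.isConnected.nonempty
    have hA : ∀ ⦃a b⦄, G.Adj a b → a ∈ ({x, v} : Set V) → b ∈ ({x, v} : Set V) := by
      rintro a b hab ha
      rcases ha with rfl | rfl
      · exact Or.inr (huniq b hab)
      · have hb : b = x := by
          have h1 : (G.neighborSet a).ncard ≤ 1 := hv1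
          exact (Set.ncard_le_one_iff (Set.toFinite _)).mp h1 hab hadj.symm
        exact Or.inl hb
    have hw := closed_walk_mem hA ((hconnG.preconnected x ↑w).some) (Or.inl rfl)
    rcases hw with h1 | h1
    · exact w.2.1 h1
    · exact w.2.2 h1
  · -- main case: `v` has degree 3 with neighbours `x, a0, b0`
    obtain ⟨a0, b0, hab, hax, hbx, hiff⟩ : ∃ a0 b0 : V, a0 ≠ b0 ∧ a0 ≠ x ∧ b0 ≠ x ∧
        ∀ q, G.Adj v q ↔ (q = x ∨ q = a0 ∨ q = b0) := by
      have h3 : (G.neighborSet v).ncard = 3 := hv3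
      obtain ⟨a, b, c, hab, hac, hbc, hs⟩ := Set.ncard_eq_three.mp h3
      have hq : ∀ q, G.Adj v q ↔ (q = a ∨ q = b ∨ q = c) := by
        intro q
        have : q ∈ G.neighborSet v ↔ q ∈ ({a, b, c} : Set V) := by rw [hs]
        simpa using this
      have hx3 : x = a ∨ x = b ∨ x = c := (hq x).mp hadj.symm
      rcases hx3 with rfl | rfl | rfl
      · exact ⟨b, c, hbc, fun h => hab h.symm, fun h => hac h.symm, hq⟩
      · exact ⟨a, c, hac, hab, fun h => hbc h.symm, fun q => by rw [hq q]; tauto⟩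
      · exact ⟨a, b, hab, hac, hbc, fun q => by rw [hq q]; tauto⟩
    have ha0 : G.Adj v a0 := (hiff a0).mpr (Or.inr (Or.inl rfl))
    have hb0 : G.Adj v b0 := (hiff b0).mpr (Or.inr (Or.inr rfl))
    have hav : a0 ≠ v := ha0.ne.symm
    have hbv : b0 ≠ v := hb0.ne.symm
    have hvX : v ∉ X := by
      intro hvIn
      have h1 := (hXiff v).mp hvIn
      have h3 : (G.neighborSet v).ncard = 3 := hv3
      have h1' : (G.neighborSet v).ncard ≤ 1 := h1
      omega
    set F : Prop := T'.Adj ⟨a0, hax, hav⟩ ⟨b0, hbx, hbv⟩ ∧ ¬G.Adj a0 b0 with hFdef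
    set T : SimpleGraph V := stmtT G x v a0 b0 T' F hxv hav hbv with hTdef
    have hTadj : ∀ p q : V, T.Adj p q ↔
        ((p = x ∧ q = v) ∨ (p = v ∧ q = x) ∨ (p = v ∧ q = a0) ∨ (p = a0 ∧ q = v) ∨
        (F ∧ ((p = v ∧ q = b0) ∨ (p = b0 ∧ q = v))) ∨
        (∃ (hp : p ≠ x ∧ p ≠ v) (hq : q ≠ x ∧ q ≠ v), T'.Adj ⟨p, hp⟩ ⟨q, hq⟩ ∧ G.Adj p q)) :=
      fun p q => Iff.rfl
    -- classification of the non-`G` edges of `T'`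
    have fake_classify : ∀ p q : {w : V // w ≠ x ∧ w ≠ v}, T'.Adj p q → ¬G.Adj (p : V) (q : V) →
        (((p : V) = a0 ∧ (q : V) = b0) ∨ ((p : V) = b0 ∧ (q : V) = a0)) ∧ F := by
      intro p q hpq hng
      obtain ⟨hne, hor⟩ := hle hpq
      rcases hor with hg | ⟨hva, hvb⟩
      · exact absurd hg hng
      have hp3 := (hiff (p : V)).mp hva
      have hq3 := (hiff (q : V)).mp hvb
      rcases hp3 with hp3 | hp3 | hp3
      · exact absurd hp3 p.2.1
      · rcases hq3 with hq3 | hq3 | hq3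
        · exact absurd hq3 q.2.1
        · exact absurd (Subtype.ext (hp3.trans hq3.symm)) hne
        · have hp' : p = (⟨a0, hax, hav⟩ : {w : V // w ≠ x ∧ w ≠ v}) := Subtype.ext hp3
          have hq' : q = (⟨b0, hbx, hbv⟩ : {w : V // w ≠ x ∧ w ≠ v}) := Subtype.ext hq3
          refine ⟨Or.inl ⟨hp3, hq3⟩, ?_, fun hg => hng (by rw [hp3, hq3]; exact hg)⟩
          rw [hp', hq'] at hpq; exact hpq
      · rcases hq3 with hq3 | hq3 | hq3
        · exact absurd hq3 q.2.1
        · have hp' : p = (⟨b0, hbx, hbv⟩ : {w : V // w ≠ x ∧ w ≠ v}) := Subtype.ext hp3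
          have hq' : q = (⟨a0, hax, hav⟩ : {w : V // w ≠ x ∧ w ≠ v}) := Subtype.ext hq3
          refine ⟨Or.inr ⟨hp3, hq3⟩, ?_, fun hg => hng (by rw [hp3, hq3]; exact hg.symm)⟩
          rw [hp', hq'] at hpq; exact hpq.symm
        · exact absurd (Subtype.ext (hp3.trans hq3.symm)) hne
    -- real edges of `T'` give edges of `T`
    have hrealT : ∀ p q : {w : V // w ≠ x ∧ w ≠ v}, T'.Adj p q → G.Adj (p : V) (q : V) →
        T.Adj (p : V) (q : V) := by
      intro p q ht hg
      exact (hTadj _ _).mpr (Or.inr (Or.inr (Or.inr (Or.inr (Or.inr ⟨p.2, q.2, ht, hg⟩)))))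
    have edge_lift : ∀ ⦃p q : {w : V // w ≠ x ∧ w ≠ v}⦄, T'.Adj p q →
        T.Reachable (p : V) (q : V) := by
      intro p q hpq
      by_cases hg : G.Adj (p : V) (q : V)
      · exact (hrealT p q hpq hg).reachable
      · obtain ⟨hcase, hFk⟩ := fake_classify p q hpq hg
        have h1 : T.Adj a0 v := (hTadj _ _).mpr (Or.inr (Or.inr (Or.inr (Or.inl ⟨rfl, rfl⟩))))
        have h2 : T.Adj v b0 :=
          (hTadj _ _).mpr (Or.inr (Or.inr (Or.inr (Or.inr (Or.inl ⟨hFk, Or.inl ⟨rfl, rfl⟩⟩)))))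
        rcases hcase with ⟨hpa, hqb⟩ | ⟨hpb, hqa⟩
        · rw [hpa, hqb]
          exact h1.reachable.trans h2.reachable
        · rw [hpb, hqa]
          exact (h2.reachable.symm).trans h1.reachable.symm
    have reach_v : ∀ w : V, T.Reachable v w := by
      intro w
      by_cases hwx : w = x
      · subst hwx
        exact ((hTadj _ _).mpr (Or.inr (Or.inl ⟨rfl, rfl⟩)) : T.Adj v w).reachable
      by_cases hwv : w = v
      · subst hwv; rfl
      · have h1 : T.Adj v a0 := (hTadj _ _).mpr (Or.inr (Or.inr (Or.inl ⟨rfl, rfl⟩)))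
        have h2 : T'.Reachable ⟨a0, hax, hav⟩ ⟨w, hwx, hwv⟩ :=
          htree.isConnected.preconnected _ _
        exact h1.reachable.trans (reachable_lift Subtype.val edge_lift h2)
    have hconnT : T.Connected := by
      rw [SimpleGraph.connected_iff]
      exact ⟨fun p q => (reach_v p).symm.trans (reach_v q), ⟨x⟩⟩
    have sym2_val : ∀ a b c d : {w : V // w ≠ x ∧ w ≠ v},
        s(a, b) = s(c, d) → s((a : V), (b : V)) = s((c : V), (d : V)) := by
      intro a b c d hcd
      have := congrArg (Sym2.map (Subtype.val)) hcd
      simpa using this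
    have hT'bridge : ∀ ⦃p q : {w : V // w ≠ x ∧ w ≠ v}⦄, T'.Adj p q →
        ¬(T' \ SimpleGraph.fromEdgeSet {s(p, q)}).Reachable p q := by
      intro p q hpq
      have hb := (SimpleGraph.isAcyclic_iff_forall_adj_isBridge.mp htree.2) hpq
      exact ((SimpleGraph.isBridge_iff).mp hb)
    have hbxv : T.IsBridge s(x, v) := by
      refine bridge_of_closed ((hTadj _ _).mpr (Or.inl ⟨rfl, rfl⟩)) {w | w = x} rfl
        (fun hc => hxv hc.symm) ?_
      intro a b hab ha
      have ha' : a = x := ha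
      subst ha'
      obtain ⟨h1, h2⟩ := (del_adj _ _).mp hab
      rcases (hTadj a b).mp h1 with ⟨-, rfl⟩ | ⟨hc, -⟩ | ⟨hc, -⟩ | ⟨hc, -⟩ |
        ⟨-, ⟨hc, -⟩ | ⟨hc, -⟩⟩ | ⟨hpw, -, -, -⟩
      · exact absurd rfl h2
      · exact absurd hc hxv
      · exact absurd hc hxv
      · exact absurd hc.symm hax
      · exact absurd hc hxv
      · exact absurd hc.symm hbx
      · exact absurd rfl hpw.1
    have hbva0 : T.IsBridge s(v, a0) := by
      by_cases hF : F
      · refine bridge_of_closed ((hTadj _ _).mpr (Or.inr (Or.inr (Or.inl ⟨rfl, rfl⟩))))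
          {w | w = x ∨ w = v ∨ ∃ hw : w ≠ x ∧ w ≠ v,
            (T' \ SimpleGraph.fromEdgeSet
              {s((⟨a0, hax, hav⟩ : {w : V // w ≠ x ∧ w ≠ v}), ⟨b0, hbx, hbv⟩)}).Reachable
              ⟨b0, hbx, hbv⟩ ⟨w, hw⟩}
          (Or.inr (Or.inl rfl)) ?_ ?_
        · rintro (hc | hc | ⟨hw, hr⟩)
          · exact hax hc
          · exact hav hc
          · exact hT'bridge hF.1 hr.symm
        · intro a b hab ha
          obtain ⟨h1, h2⟩ := (del_adj _ _).mp hab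
          rcases (hTadj a b).mp h1 with ⟨rfl, rfl⟩ | ⟨rfl, rfl⟩ | ⟨rfl, rfl⟩ | ⟨rfl, rfl⟩ |
            ⟨hFk, ⟨rfl, rfl⟩ | ⟨rfl, rfl⟩⟩ | ⟨hpw, hqw, ht, hg⟩
          · exact Or.inr (Or.inl rfl)
          · exact Or.inl rfl
          · exact absurd rfl h2
          · exact absurd (Sym2.eq_swap) h2
          · exact Or.inr (Or.inr ⟨⟨hbx, hbv⟩, SimpleGraph.Reachable.refl _⟩)
          · exact Or.inr (Or.inl rfl)
          · rcases ha with hc | hc | ⟨hw, hr⟩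
            · exact absurd hc hpw.1
            · exact absurd hc hpw.2
            · refine Or.inr (Or.inr ⟨hqw, hr.trans (SimpleGraph.Adj.reachable ?_)⟩)
              refine (del_adj _ _).mpr ⟨ht, fun heq => ?_⟩
              have h3 := sym2_val _ _ _ _ heq
              rcases Sym2.eq_iff.mp h3 with ⟨h4, h5⟩ | ⟨h4, h5⟩
              · have h4' : a = a0 := h4
                have h5' : b = b0 := h5
                rw [h4', h5'] at hg; exact hF.2 hg
              · have h4' : a = b0 := h4
                have h5' : b = a0 := h5
                rw [h4', h5'] at hg; exact hF.2 hg.symm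
      · refine bridge_of_closed ((hTadj _ _).mpr (Or.inr (Or.inr (Or.inl ⟨rfl, rfl⟩))))
          {w | w = x ∨ w = v} (Or.inr rfl) ?_ ?_
        · rintro (hc | hc)
          · exact hax hc
          · exact hav hc
        · intro a b hab ha
          obtain ⟨h1, h2⟩ := (del_adj _ _).mp hab
          rcases (hTadj a b).mp h1 with ⟨rfl, rfl⟩ | ⟨rfl, rfl⟩ | ⟨rfl, rfl⟩ | ⟨rfl, rfl⟩ |
            ⟨hFk, -⟩ | ⟨hpw, hqw, ht, hg⟩
          · exact Or.inr rfl
          · exact Or.inl rfl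
          · exact absurd rfl h2
          · exact absurd (Sym2.eq_swap) h2
          · exact absurd hFk hF
          · rcases ha with hc | hc
            · exact absurd hc hpw.1
            · exact absurd hc hpw.2
    have hbvb0 : F → T.IsBridge s(v, b0) := by
      intro hF
      refine bridge_of_closed
        ((hTadj _ _).mpr (Or.inr (Or.inr (Or.inr (Or.inr (Or.inl ⟨hF, Or.inl ⟨rfl, rfl⟩⟩))))))
        {w | w = x ∨ w = v ∨ ∃ hw : w ≠ x ∧ w ≠ v,
          (T' \ SimpleGraph.fromEdgeSet
            {s((⟨a0, hax, hav⟩ : {w : V // w ≠ x ∧ w ≠ v}), ⟨b0, hbx, hbv⟩)}).Reachable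
            ⟨a0, hax, hav⟩ ⟨w, hw⟩}
        (Or.inr (Or.inl rfl)) ?_ ?_
      · rintro (hc | hc | ⟨hw, hr⟩)
        · exact hbx hc
        · exact hbv hc
        · exact hT'bridge hF.1 hr
      · intro a b hab ha
        obtain ⟨h1, h2⟩ := (del_adj _ _).mp hab
        rcases (hTadj a b).mp h1 with ⟨rfl, rfl⟩ | ⟨rfl, rfl⟩ | ⟨rfl, rfl⟩ | ⟨rfl, rfl⟩ |
          ⟨hFk, ⟨rfl, rfl⟩ | ⟨rfl, rfl⟩⟩ | ⟨hpw, hqw, ht, hg⟩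
        · exact Or.inr (Or.inl rfl)
        · exact Or.inl rfl
        · exact Or.inr (Or.inr ⟨⟨hax, hav⟩, SimpleGraph.Reachable.refl _⟩)
        · exact Or.inr (Or.inl rfl)
        · exact absurd rfl h2
        · exact absurd (Sym2.eq_swap) h2
        · rcases ha with hc | hc | ⟨hw, hr⟩
          · exact absurd hc hpw.1
          · exact absurd hc hpw.2
          · refine Or.inr (Or.inr ⟨hqw, hr.trans (SimpleGraph.Adj.reachable ?_)⟩)
            refine (del_adj _ _).mpr ⟨ht, fun heq => ?_⟩
            have h3 := sym2_val _ _ _ _ heq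
            rcases Sym2.eq_iff.mp h3 with ⟨h4, h5⟩ | ⟨h4, h5⟩
            · have h4' : a = a0 := h4
              have h5' : b = b0 := h5
              rw [h4', h5'] at hg; exact hF.2 hg
            · have h4' : a = b0 := h4
              have h5' : b = a0 := h5
              rw [h4', h5'] at hg; exact hF.2 hg.symm
    have hbreal : ∀ (p q : V) (hp : p ≠ x ∧ p ≠ v) (hq : q ≠ x ∧ q ≠ v),
        T'.Adj ⟨p, hp⟩ ⟨q, hq⟩ → G.Adj p q → T.IsBridge s(p, q) := by
      intro p q hp hq ht0 hg0
      have hKfake : F → (T' \ SimpleGraph.fromEdgeSet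
          {s((⟨p, hp⟩ : {w : V // w ≠ x ∧ w ≠ v}), ⟨q, hq⟩)}).Adj
          ⟨a0, hax, hav⟩ ⟨b0, hbx, hbv⟩ := by
        intro hF
        refine (del_adj _ _).mpr ⟨hF.1, fun heq => ?_⟩
        have h3 := sym2_val _ _ _ _ heq
        rcases Sym2.eq_iff.mp h3 with ⟨h4, h5⟩ | ⟨h4, h5⟩
        · have h4' : a0 = p := h4
          have h5' : b0 = q := h5
          exact hF.2 (by rw [h4', h5']; exact hg0)
        · have h4' : a0 = q := h4
          have h5' : b0 = p := h5
          exact hF.2 (by rw [h4', h5']; exact hg0.symm)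
      refine bridge_of_closed ((hTadj _ _).mpr (Or.inr (Or.inr (Or.inr (Or.inr
          (Or.inr ⟨hp, hq, ht0, hg0⟩))))))
        {w | (∃ hw : w ≠ x ∧ w ≠ v, (T' \ SimpleGraph.fromEdgeSet
            {s((⟨p, hp⟩ : {w : V // w ≠ x ∧ w ≠ v}), ⟨q, hq⟩)}).Reachable ⟨p, hp⟩ ⟨w, hw⟩) ∨
          ((w = x ∨ w = v) ∧ (T' \ SimpleGraph.fromEdgeSet
            {s((⟨p, hp⟩ : {w : V // w ≠ x ∧ w ≠ v}), ⟨q, hq⟩)}).Reachable ⟨p, hp⟩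
            ⟨a0, hax, hav⟩)}
        (Or.inl ⟨hp, SimpleGraph.Reachable.refl _⟩) ?_ ?_
      · rintro (⟨hw, hr⟩ | ⟨hc, -⟩)
        · exact hT'bridge ht0 hr
        · rcases hc with hc | hc
          · exact hq.1 hc
          · exact hq.2 hc
      · intro a b hab ha
        obtain ⟨h1, h2⟩ := (del_adj _ _).mp hab
        rcases (hTadj a b).mp h1 with ⟨rfl, rfl⟩ | ⟨rfl, rfl⟩ | ⟨rfl, rfl⟩ | ⟨rfl, rfl⟩ |
          ⟨hFk, ⟨rfl, rfl⟩ | ⟨rfl, rfl⟩⟩ | ⟨hpw, hqw, ht, hg⟩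
        · rcases ha with ⟨hw, -⟩ | ⟨-, hra0⟩
          · exact absurd rfl hw.1
          · exact Or.inr ⟨Or.inr rfl, hra0⟩
        · rcases ha with ⟨hw, -⟩ | ⟨-, hra0⟩
          · exact absurd rfl hw.2
          · exact Or.inr ⟨Or.inl rfl, hra0⟩
        · rcases ha with ⟨hw, -⟩ | ⟨-, hra0⟩
          · exact absurd rfl hw.2
          · exact Or.inl ⟨⟨hax, hav⟩, hra0⟩
        · rcases ha with ⟨hw, hr⟩ | ⟨hc, -⟩
          · exact Or.inr ⟨Or.inr rfl, hr⟩
          · rcases hc with hc | hc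
            · exact absurd hc hax
            · exact absurd hc hav
        · rcases ha with ⟨hw, -⟩ | ⟨-, hra0⟩
          · exact absurd rfl hw.2
          · exact Or.inl ⟨⟨hbx, hbv⟩, hra0.trans (hKfake hFk).reachable⟩
        · rcases ha with ⟨hw, hr⟩ | ⟨hc, -⟩
          · exact Or.inr ⟨Or.inr rfl, hr.trans (hKfake hFk).symm.reachable⟩
          · rcases hc with hc | hc
            · exact absurd hc hbx
            · exact absurd hc hbv
        · rcases ha with ⟨hw, hr⟩ | ⟨hc, -⟩
          · refine Or.inl ⟨hqw, hr.trans (SimpleGraph.Adj.reachable ?_)⟩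
            exact (del_adj _ _).mpr ⟨ht, fun heq => h2 (sym2_val _ _ _ _ heq)⟩
          · rcases hc with hc | hc
            · exact absurd hc hpw.1
            · exact absurd hc hpw.2
    have hacyc : T.IsAcyclic := by
      rw [SimpleGraph.isAcyclic_iff_forall_adj_isBridge]
      intro p q hpq
      rcases (hTadj p q).mp hpq with ⟨rfl, rfl⟩ | ⟨rfl, rfl⟩ | ⟨rfl, rfl⟩ | ⟨rfl, rfl⟩ |
        ⟨hFk, ⟨rfl, rfl⟩ | ⟨rfl, rfl⟩⟩ | ⟨hpw, hqw, ht, hg⟩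
      · exact hbxv
      · have := hbxv; rwa [Sym2.eq_swap] at this
      · exact hbva0
      · have := hbva0; rwa [Sym2.eq_swap] at this
      · exact hbvb0 hFk
      · have := hbvb0 hFk; rwa [Sym2.eq_swap] at this
      · exact hbreal p q hpw hqw ht hg
    have hTle : T ≤ G := by
      intro p q hpq
      rcases (hTadj p q).mp hpq with ⟨rfl, rfl⟩ | ⟨rfl, rfl⟩ | ⟨rfl, rfl⟩ | ⟨rfl, rfl⟩ |
        ⟨hF, ⟨rfl, rfl⟩ | ⟨rfl, rfl⟩⟩ | ⟨hp, hq, ht, hg⟩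
      · exact hadj
      · exact hadj.symm
      · exact ha0
      · exact ha0.symm
      · exact hb0
      · exact hb0.symm
      · exact hg
    have hnbrTx : T.neighborSet x = {v} := by
      ext q
      constructor
      · intro hq
        rcases (hTadj x q).mp hq with ⟨-, rfl⟩ | ⟨hc, -⟩ | ⟨hc, -⟩ | ⟨hc, -⟩ |
          ⟨-, ⟨hc, -⟩ | ⟨hc, -⟩⟩ | ⟨hpw, -, -, -⟩
        · rfl
        · exact absurd hc hxv
        · exact absurd hc hxv
        · exact absurd hc.symm hax
        · exact absurd hc hxv
        · exact absurd hc.symm hbx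
        · exact absurd rfl hpw.1
      · intro hq
        have hq' : q = v := hq
        subst hq'
        exact (hTadj _ _).mpr (Or.inl ⟨rfl, rfl⟩)
    have hdegTx : deg T x ≤ 1 := by
      show (T.neighborSet x).ncard ≤ 1
      rw [hnbrTx, Set.ncard_singleton]
    have hdegTv : ¬ deg T v ≤ 1 := by
      have hsub : ({x, a0} : Set V) ⊆ T.neighborSet v := by
        rintro y hy
        rcases hy with rfl | hy
        · exact (hTadj _ _).mpr (Or.inr (Or.inl ⟨rfl, rfl⟩))
        · have hy' : y = a0 := hy
          subst hy'
          exact (hTadj _ _).mpr (Or.inr (Or.inr (Or.inl ⟨rfl, rfl⟩)))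
      intro hle1
      have h2 : ({x, a0} : Set V).ncard ≤ (T.neighborSet v).ncard :=
        Set.ncard_le_ncard hsub (Set.toFinite _)
      rw [Set.ncard_pair (fun hc => hax hc.symm)] at h2
      have h3 : (T.neighborSet v).ncard ≤ 1 := hle1
      omega
    have hkey : ∀ (w : V) (hw : w ≠ x ∧ w ≠ v), (deg T w ≤ 1 ↔ w ∈ X) := by
      intro w hw
      by_cases hwa : w = a0
      · subst hwa
        by_cases haX : w ∈ X
        · refine iff_of_true ?_ haX
          have ha0nbr : ∀ q, G.Adj w q → q = v := by
            intro q hq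
            have h1 : (G.neighborSet w).ncard ≤ 1 := (hXiff w).mp haX
            exact (Set.ncard_le_one_iff (Set.toFinite _)).mp h1 hq ha0.symm
          have hset : T.neighborSet w = {v} := by
            ext q
            constructor
            · intro hq
              rcases (hTadj w q).mp hq with ⟨hc, -⟩ | ⟨hc, -⟩ | ⟨hc, -⟩ | ⟨-, rfl⟩ |
                ⟨-, ⟨hc, -⟩ | ⟨hc, -⟩⟩ | ⟨hpw, hqw, ht, hg⟩
              · exact absurd hc hax
              · exact absurd hc.symm hav.symm
              · exact absurd hc.symm hav.symm
              · rfl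
              · exact absurd hc.symm hav.symm
              · exact absurd hc hab
              · exact absurd (ha0nbr q hg) hqw.2
            · intro hq
              have hq' : q = v := hq
              subst hq'
              exact (hTadj _ _).mpr (Or.inr (Or.inr (Or.inr (Or.inl ⟨rfl, rfl⟩))))
          show (T.neighborSet w).ncard ≤ 1
          rw [hset, Set.ncard_singleton]
        · refine iff_of_false ?_ haX
          have h2' : ¬ deg T' ⟨w, hax, hav⟩ ≤ 1 := fun hc => haX ((hleafiff _).mp hc)
          have h2 : 1 < (T'.neighborSet ⟨w, hax, hav⟩).ncard := by
            have h2'' : ¬ (T'.neighborSet ⟨w, hax, hav⟩).ncard ≤ 1 := h2'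
            omega
          obtain ⟨q, hqmem, hqne⟩ := Set.exists_ne_of_one_lt_ncard h2 ⟨b0, hbx, hbv⟩
          have hreal : G.Adj w (q : V) := by
            by_contra hng
            rcases (fake_classify _ _ hqmem hng).1 with ⟨-, hqb⟩ | ⟨hc, -⟩
            · exact hqne (Subtype.ext hqb)
            · exact hab hc
          have hT1 : T.Adj w (q : V) := hrealT _ _ hqmem hreal
          have hT2 : T.Adj w v := (hTadj _ _).mpr (Or.inr (Or.inr (Or.inr (Or.inl ⟨rfl, rfl⟩))))
          intro hle1
          have hsub : ({v, (q : V)} : Set V) ⊆ T.neighborSet w := by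
            rintro y hy
            rcases hy with rfl | hy
            · exact hT2
            · have hy' : y = (q : V) := hy
              subst hy'
              exact hT1
          have h3 := Set.ncard_le_ncard hsub (Set.toFinite _)
          rw [Set.ncard_pair (fun hc => q.2.2 hc.symm)] at h3
          have h4 : (T.neighborSet w).ncard ≤ 1 := hle1
          omega
      · by_cases hwb : w = b0
        · subst hwb
          by_cases hbX : w ∈ X
          · refine iff_of_true ?_ hbX
            have hb0nbr : ∀ q, G.Adj w q → q = v := by
              intro q hq
              have h1 : (G.neighborSet w).ncard ≤ 1 := (hXiff w).mp hbX
              exact (Set.ncard_le_one_iff (Set.toFinite _)).mp h1 hq hb0.symm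
            have hne' : (⟨w, hbx, hbv⟩ : {y : V // y ≠ x ∧ y ≠ v}) ≠ ⟨a0, hax, hav⟩ :=
              fun hc => hab (congrArg Subtype.val hc).symm
            have hex : ∃ c, T'.Adj ⟨w, hbx, hbv⟩ c := by
              have r := (htree.isConnected.preconnected ⟨w, hbx, hbv⟩ ⟨a0, hax, hav⟩).some
              exact ⟨r.getVert 1, r.adj_snd (SimpleGraph.Walk.not_nil_of_ne hne')⟩
            obtain ⟨c, hc⟩ := hex
            have hng : ¬ G.Adj w (c : V) := fun hg => c.2.2 (hb0nbr _ hg)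
            have hFk : F := (fake_classify _ _ hc hng).2
            have hset : T.neighborSet w = {v} := by
              ext q
              constructor
              · intro hq
                rcases (hTadj w q).mp hq with ⟨hc', -⟩ | ⟨hc', -⟩ | ⟨hc', -⟩ | ⟨hc', -⟩ |
                  ⟨-, ⟨hc', -⟩ | ⟨-, rfl⟩⟩ | ⟨hpw, hqw, ht, hg⟩
                · exact absurd hc' hbx
                · exact absurd hc' hbv
                · exact absurd hc' hbv
                · exact absurd hc'.symm hab
                · exact absurd hc' hbv
                · rfl
                · exact absurd (hb0nbr q hg) hqw.2
              · intro hq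
                have hq' : q = v := hq
                subst hq'
                exact (hTadj _ _).mpr
                  (Or.inr (Or.inr (Or.inr (Or.inr (Or.inl ⟨hFk, Or.inr ⟨rfl, rfl⟩⟩)))))
            show (T.neighborSet w).ncard ≤ 1
            rw [hset, Set.ncard_singleton]
          · refine iff_of_false ?_ hbX
            have h2' : ¬ deg T' ⟨w, hbx, hbv⟩ ≤ 1 := fun hc => hbX ((hleafiff _).mp hc)
            have h2 : 1 < (T'.neighborSet ⟨w, hbx, hbv⟩).ncard := by
              have h2'' : ¬ (T'.neighborSet ⟨w, hbx, hbv⟩).ncard ≤ 1 := h2'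
              omega
            by_cases hF : F
            · obtain ⟨q, hqmem, hqne⟩ := Set.exists_ne_of_one_lt_ncard h2 ⟨a0, hax, hav⟩
              have hreal : G.Adj w (q : V) := by
                by_contra hng
                rcases (fake_classify _ _ hqmem hng).1 with ⟨hc, -⟩ | ⟨-, hqa⟩
                · exact hab hc.symm
                · exact hqne (Subtype.ext hqa)
              have hT1 : T.Adj w (q : V) := hrealT _ _ hqmem hreal
              have hT2 : T.Adj w v := (hTadj _ _).mpr
                (Or.inr (Or.inr (Or.inr (Or.inr (Or.inl ⟨hF, Or.inr ⟨rfl, rfl⟩⟩)))))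
              intro hle1
              have hsub : ({v, (q : V)} : Set V) ⊆ T.neighborSet w := by
                rintro y hy
                rcases hy with rfl | hy
                · exact hT2
                · have hy' : y = (q : V) := hy
                  subst hy'
                  exact hT1
              have h3 := Set.ncard_le_ncard hsub (Set.toFinite _)
              rw [Set.ncard_pair (fun hc => q.2.2 hc.symm)] at h3
              have h4 : (T.neighborSet w).ncard ≤ 1 := hle1
              omega
            · have hsub : Subtype.val '' T'.neighborSet ⟨w, hbx, hbv⟩ ⊆ T.neighborSet w := by
                rintro y ⟨q, hq, rfl⟩
                by_cases hg : G.Adj w (q : V)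
                · exact hrealT _ _ hq hg
                · exact absurd (fake_classify _ _ hq hg).2 hF
              intro hle1
              have h3 := Set.ncard_le_ncard hsub (Set.toFinite _)
              rw [Set.ncard_image_of_injective _ Subtype.val_injective] at h3
              have h4 : (T.neighborSet w).ncard ≤ 1 := hle1
              omega
        · have hnbr : T.neighborSet w = Subtype.val '' T'.neighborSet ⟨w, hw⟩ := by
            ext q
            constructor
            · intro hq
              rcases (hTadj w q).mp hq with ⟨hc, -⟩ | ⟨hc, -⟩ | ⟨hc, -⟩ | ⟨hc, -⟩ |
                ⟨-, ⟨hc, -⟩ | ⟨hc, -⟩⟩ | ⟨hpw, hqw, ht, hg⟩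
              · exact absurd hc hw.1
              · exact absurd hc hw.2
              · exact absurd hc hw.2
              · exact absurd hc hwa
              · exact absurd hc hw.2
              · exact absurd hc hwb
              · exact ⟨⟨q, hqw⟩, ht, rfl⟩
            · rintro ⟨q', hq', rfl⟩
              by_cases hg : G.Adj w (q' : V)
              · exact hrealT _ _ hq' hg
              · rcases (fake_classify _ _ hq' hg).1 with ⟨hc, -⟩ | ⟨hc, -⟩
                · exact absurd hc hwa
                · exact absurd hc hwb
          have hdeq : deg T w = deg T' ⟨w, hw⟩ := by
            show (T.neighborSet w).ncard = (T'.neighborSet ⟨w, hw⟩).ncard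
            rw [hnbr, Set.ncard_image_of_injective _ Subtype.val_injective]
          rw [hdeq]
          exact hleafiff ⟨w, hw⟩
    have hleafT : {w | deg T w ≤ 1} = X := by
      ext w
      simp only [Set.mem_setOf_eq]
      by_cases hwx : w = x
      · subst hwx
        exact iff_of_true hdegTx hx
      · by_cases hwv : w = v
        · subst hwv
          exact iff_of_false hdegTv hvX
        · exact hkey w ⟨hwx, hwv⟩
    exact ⟨T, hTle, ⟨hconnT, hacyc⟩, hleafT⟩
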